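/- arXiv:2405.15454 — 2 statements merged into one kernel-verified Lean document; each statement's English description precedes it below -/
import Mathlib

section
/- Let d ≥ 1, let W ∈ ℝ^d with W ≠ 0, let x ∈ ℝ^d, let ν : ℝ → ℝ be strictly monotone (strictly increasing or strictly decreasing), and let a, b ∈ ℝ satisfy ν(a) ≤ ν(b). Suppose ν(⟨W, x⟩) < ν(a). Then θ* = ((a − ⟨W, x⟩)/‖W‖²) · W belongs to the feasible set S = {θ ∈ ℝ^d : ν(a) ≤ ν(⟨W, x + θ⟩) ≤ ν(b)} and is the unique minimizer of θ ↦ ‖θ‖² over S. -/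
open scoped RealInnerProductSpace

/-- Theorem 1 (Optimal θ), case ν(Wᵀx) < α^min: the intervention
θ* = ((a − ⟨W,x⟩)/‖W‖²) W is feasible and is the unique minimizer of ‖θ‖²
over the feasible set S = {θ : ν(a) ≤ ν(⟨W, x+θ⟩) ≤ ν(b)}. -/
theorem stmt_1 (d : ℕ) (hd : 1 ≤ d)
    (W x : EuclideanSpace ℝ (Fin d)) (hW : W ≠ 0)
    (ν : ℝ → ℝ) (hν : StrictMono ν ∨ StrictAnti ν)
    (a b : ℝ) (hab : ν a ≤ ν b)
    (hx : ν ⟪W, x⟫ < ν a)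
    (S : Set (EuclideanSpace ℝ (Fin d)))
    (hS : S = {θ : EuclideanSpace ℝ (Fin d) |
      ν a ≤ ν ⟪W, x + θ⟫ ∧ ν ⟪W, x + θ⟫ ≤ ν b})
    (θstar : EuclideanSpace ℝ (Fin d))
    (hθ : θstar = ((a - ⟪W, x⟫) / ‖W‖ ^ 2) • W) :
    θstar ∈ S ∧ ∀ θ ∈ S, θ ≠ θstar → ‖θstar‖ ^ 2 < ‖θ‖ ^ 2 := by
  set c : ℝ := a - ⟪W, x⟫ with hc
  have hW2 : (0:ℝ) < ‖W‖ ^ 2 := pow_pos (norm_pos_iff.mpr hW) 2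
  have hWW : ⟪W, W⟫ = ‖W‖ ^ 2 := real_inner_self_eq_norm_sq W
  have hWθ : ⟪W, θstar⟫ = c := by
    rw [hθ, real_inner_smul_right, hWW]
    field_simp
  have hfeas : ⟪W, x + θstar⟫ = a := by
    rw [inner_add_right, hWθ]; ring
  -- key: for θ ∈ S, c * ⟪W, θ⟫ ≥ c * c
  have key : ∀ θ ∈ S, c * c ≤ c * ⟪W, θ⟫ := by
    intro θ hθS
    rw [hS] at hθS
    obtain ⟨h1, _⟩ := hθS
    rcases hν with hm | hm
    · have hcpos : 0 < c := by
        have := hm.lt_iff_lt.mp hx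
        simp only [hc]; linarith
      have : a ≤ ⟪W, x + θ⟫ := hm.le_iff_le.mp h1
      rw [inner_add_right] at this
      nlinarith
    · have hcneg : c < 0 := by
        have := hm.lt_iff_gt.mp hx
        simp only [hc]; linarith
      have : ⟪W, x + θ⟫ ≤ a := hm.le_iff_ge.mp h1
      rw [inner_add_right] at this
      nlinarith
  constructor
  · rw [hS]
    refine ⟨by rw [hfeas], by rw [hfeas]; exact hab⟩
  · intro θ hθS hne
    have hkey := key θ hθS
    have hcross : 0 ≤ ⟪θstar, θ - θstar⟫ := by
      rw [hθ, real_inner_smul_left, inner_sub_right, ← hθ, hWθ]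
      have h0 : 0 ≤ c * (⟪W, θ⟫ - c) := by nlinarith
      rw [div_mul_eq_mul_div]
      exact div_nonneg h0 hW2.le
    have hd2 : 0 < ‖θ - θstar‖ ^ 2 :=
      pow_pos (norm_pos_iff.mpr (sub_ne_zero.mpr hne)) 2
    have hexp := norm_add_sq_real θstar (θ - θstar)
    rw [add_sub_cancel] at hexp
    linarith
end

section
/- Let d ≥ 1, let W ∈ ℝ^d with W ≠ 0, let x ∈ ℝ^d, let ν : ℝ → ℝ be strictly monotone (strictly increasing or strictly decreasing), and let a, b ∈ ℝ satisfy ν(a) ≤ ν(b). Define θ* ∈ ℝ^d piecewise by: θ* = ((b − ⟨W, x⟩)/‖W‖²) · W if ν(⟨W, x⟩) > ν(b); θ* = ((a − ⟨W, x⟩)/‖W‖²) · W if ν(⟨W, x⟩) < ν(a); and θ* = 0 otherwise. Then the intervened state satisfies the guarantee ν(a) ≤ ν(⟨W, x + θ*⟩) ≤ ν(b). -/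
open scoped RealInnerProductSpace

/-- The LiSeCo guarantee: the piecewise intervention θ* always brings the
intervened state x + θ* into the allowed region ν(a) ≤ ν(⟨W, ·⟩) ≤ ν(b). -/
theorem stmt_3 (d : ℕ) (hd : 1 ≤ d)
    (W x : EuclideanSpace ℝ (Fin d)) (hW : W ≠ 0)
    (ν : ℝ → ℝ) (hν : StrictMono ν ∨ StrictAnti ν)
    (a b : ℝ) (hab : ν a ≤ ν b)
    (θstar : EuclideanSpace ℝ (Fin d))
    (hθ : θstar =
      if ν ⟪W, x⟫ > ν b then ((b - ⟪W, x⟫) / ‖W‖ ^ 2) • W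
      else if ν ⟪W, x⟫ < ν a then ((a - ⟪W, x⟫) / ‖W‖ ^ 2) • W
      else 0) :
    ν a ≤ ν ⟪W, x + θstar⟫ ∧ ν ⟪W, x + θstar⟫ ≤ ν b := by
  have hWn : ‖W‖ ^ 2 ≠ 0 := pow_ne_zero 2 (norm_ne_zero_iff.mpr hW)
  have hWW : ⟪W, W⟫ = ‖W‖ ^ 2 := real_inner_self_eq_norm_sq W
  subst hθ
  split_ifs with h1 h2
  · have : ⟪W, x + ((b - ⟪W, x⟫) / ‖W‖ ^ 2) • W⟫ = b := by
      rw [inner_add_right, inner_smul_right, hWW]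
      field_simp
      ring
    rw [this]
    exact ⟨hab, le_rfl⟩
  · have : ⟪W, x + ((a - ⟪W, x⟫) / ‖W‖ ^ 2) • W⟫ = a := by
      rw [inner_add_right, inner_smul_right, hWW]
      field_simp
      ring
    rw [this]
    exact ⟨le_rfl, hab⟩
  · rw [add_zero]
    exact ⟨le_of_not_gt h2, le_of_not_gt h1⟩
end
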